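/- The inverse-probability-of-censoring weights have unit mean: E[1{C ≥ Y}/G(Y)] = 1. -/

import Mathlib

open MeasureTheory ProbabilityTheory

theorem ipcw_weights_unit_mean
    {Ω : Type*} [mΩ : MeasurableSpace Ω] (P : Measure Ω) [IsProbabilityMeasure P]
    (T C : Ω → ℝ) (hT : Measurable T) (hC : Measurable C)
    (hTnonneg : ∀ ω, 0 ≤ T ω)
    (tstar : ℝ) (htstar : 0 < tstar)
    (hindep : IndepFun T C P)
    (hatom : ∀ c : ℝ, P {ω | C ω = c} = 0)
    (G : ℝ → ℝ) (hG : ∀ y, G y = (P {ω | y < C ω}).toReal)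
    (hGt : 0 < G tstar) :
    ∫ ω, (if min (T ω) tstar ≤ C ω then (1 : ℝ) else 0) / G (min (T ω) tstar) ∂P = 1 := by
  set Y : Ω → ℝ := fun ω => min (T ω) tstar with hYdef
  have hY : Measurable Y := hT.min measurable_const
  have hGanti : Antitone G := by
    intro a b hab
    rw [hG, hG]
    exact ENNReal.toReal_mono (measure_ne_top _ _)
      (measure_mono (fun ω hω => lt_of_le_of_lt hab hω))
  have hGnonneg : ∀ y, 0 ≤ G y := fun y => by rw [hG]; exact ENNReal.toReal_nonneg
  have hGpos : ∀ y, y ≤ tstar → 0 < G y := fun y hy => lt_of_lt_of_le hGt (hGanti hy)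
  have hGmeas : Measurable G := hGanti.measurable
  have hindepYC : IndepFun Y C P := hindep.comp (measurable_id.min measurable_const) measurable_id
  haveI : IsProbabilityMeasure (P.map Y) := Measure.isProbabilityMeasure_map hY.aemeasurable
  haveI : IsProbabilityMeasure (P.map C) := Measure.isProbabilityMeasure_map hC.aemeasurable
  have hmapprod : P.map (fun ω => (Y ω, C ω)) = (P.map Y).prod (P.map C) :=
    (indepFun_iff_map_prod_eq_prod_map_map hY.aemeasurable hC.aemeasurable).mp hindepYC
  set F : ℝ × ℝ → ENNReal :=
    fun p => if p.1 ≤ p.2 then ENNReal.ofReal (1 / G p.1) else 0 with hFdef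
  have hFmeas : Measurable F := by
    apply Measurable.ite (measurableSet_le measurable_fst measurable_snd) _ measurable_const
    exact ENNReal.measurable_ofReal.comp ((measurable_const.div (hGmeas.comp measurable_fst)))
  have hfeq : ∀ ω, ENNReal.ofReal ((if Y ω ≤ C ω then (1:ℝ) else 0) / G (Y ω)) = F (Y ω, C ω) := by
    intro ω
    by_cases h : Y ω ≤ C ω <;> simp [hFdef, h]
  have hnn : 0 ≤ᵐ[P] fun ω => (if Y ω ≤ C ω then (1:ℝ) else 0) / G (Y ω) :=
    Filter.Eventually.of_forall fun ω =>
      div_nonneg (by split <;> norm_num) (hGnonneg _)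
  have hmeasf : Measurable fun ω => (if Y ω ≤ C ω then (1:ℝ) else 0) / G (Y ω) :=
    (Measurable.ite (measurableSet_le hY hC) measurable_const measurable_const).div
      (hGmeas.comp hY)
  have hstep1 : ∫⁻ ω, F (Y ω, C ω) ∂P = ∫⁻ p, F p ∂((P.map Y).prod (P.map C)) := by
    rw [← hmapprod, lintegral_map hFmeas (hY.prodMk hC)]
  have hinner : ∀ y, ∫⁻ c, F (y, c) ∂(P.map C)
      = ENNReal.ofReal (1 / G y) * ENNReal.ofReal (G y) := by
    intro y
    have h1 : ∀ c, F (y, c) = Set.indicator (Set.Ici y)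
        (fun _ => ENNReal.ofReal (1 / G y)) c := by
      intro c; by_cases h : y ≤ c <;> simp [hFdef, h]
    simp_rw [h1]
    rw [lintegral_indicator measurableSet_Ici _, setLIntegral_const]
    have hIoi : (P.map C) (Set.Ioi y) = ENNReal.ofReal (G y) := by
      rw [Measure.map_apply hC measurableSet_Ioi]
      have h2 : C ⁻¹' Set.Ioi y = {ω | y < C ω} := rfl
      rw [h2, hG y, ENNReal.ofReal_toReal (measure_ne_top _ _)]
    have hsing : (P.map C) {y} = 0 := by
      rw [Measure.map_apply hC (measurableSet_singleton y)]
      exact hatom y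
    have hIci : (P.map C) (Set.Ici y) = (P.map C) (Set.Ioi y) := by
      apply le_antisymm
      · calc (P.map C) (Set.Ici y) ≤ (P.map C) ({y} ∪ Set.Ioi y) := by
              apply measure_mono
              intro x hx
              rcases eq_or_lt_of_le (Set.mem_Ici.mp hx) with h | h
              · exact Or.inl h.symm
              · exact Or.inr h
          _ ≤ (P.map C) {y} + (P.map C) (Set.Ioi y) := measure_union_le _ _
          _ = (P.map C) (Set.Ioi y) := by rw [hsing, zero_add]
      · exact measure_mono Set.Ioi_subset_Ici_self
    rw [hIci, hIoi]
  have haeY : ∀ᵐ y ∂(P.map Y), y ≤ tstar := by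
    have hs : MeasurableSet {y : ℝ | y ≤ tstar} := measurableSet_Iic
    rw [ae_map_iff hY.aemeasurable hs]
    exact Filter.Eventually.of_forall fun ω => min_le_right _ _
  have hone : (fun y => ∫⁻ c, F (y, c) ∂(P.map C)) =ᵐ[P.map Y] (fun _ => (1 : ENNReal)) := by
    filter_upwards [haeY] with y hy
    rw [hinner y, ← ENNReal.ofReal_mul (div_nonneg zero_le_one (hGnonneg y)), one_div,
      inv_mul_cancel₀ (ne_of_gt (hGpos y hy)), ENNReal.ofReal_one]
  rw [integral_eq_lintegral_of_nonneg_ae hnn hmeasf.aestronglyMeasurable]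
  have hlin : ∫⁻ ω, ENNReal.ofReal ((if Y ω ≤ C ω then (1:ℝ) else 0) / G (Y ω)) ∂P = 1 := by
    simp_rw [hfeq]
    rw [hstep1, lintegral_prod _ hFmeas.aemeasurable, lintegral_congr_ae hone]
    simp
  rw [hlin, ENNReal.toReal_one]
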